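/- Let Φ be an irreducible root system, w ∈ W an element of the Weyl group, and 𝒥 ⊊ Δ̃ a proper subset of the extended base. Set D := −w(𝒥) = {−w(α) : α ∈ 𝒥}. Then D is a base for Φ_D(ℤ) := Φ ∩ ℤD. -/

import Mathlib

open scoped RealInnerProductSpace Classical BigOperators

noncomputable section

abbrev V (ℓ : ℕ) := EuclideanSpace ℝ (Fin ℓ)

/-- An irreducible crystallographic (reduced) root system in `ℝ^ℓ`, together with a choice of
positive system, base of simple roots, highest root with its marks `c i`, and the Weyl group
(generated by the reflections in the roots). -/
structure RootSystemData (ℓ : ℕ) where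
  Φ : Set (V ℓ)
  finite : Φ.Finite
  nonzero : (0 : V ℓ) ∉ Φ
  spanning : Submodule.span ℝ Φ = ⊤
  neg_mem : ∀ α ∈ Φ, -α ∈ Φ
  reduced : ∀ α ∈ Φ, ∀ t : ℝ, t • α ∈ Φ → t = 1 ∨ t = -1
  crystallographic : ∀ α ∈ Φ, ∀ β ∈ Φ, ∃ n : ℤ, 2 * ⟪α, β⟫ / ⟪β, β⟫ = (n : ℝ)
  reflect_mem : ∀ α ∈ Φ, ∀ β ∈ Φ, β - (2 * ⟪β, α⟫ / ⟪α, α⟫) • α ∈ Φ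
  irreducible : ¬ ∃ Φ₁ Φ₂ : Set (V ℓ), Φ₁.Nonempty ∧ Φ₂.Nonempty ∧ Φ₁ ∪ Φ₂ = Φ ∧
      ∀ α ∈ Φ₁, ∀ β ∈ Φ₂, ⟪α, β⟫ = 0
  /-- the positive system `Φ⁺` -/
  pos : Set (V ℓ)
  pos_subset : pos ⊆ Φ
  pos_choice : ∀ α ∈ Φ, (α ∈ pos ↔ -α ∉ pos)
  /-- the simple roots `α₁, …, α_ℓ` -/
  simple : Fin ℓ → V ℓ
  simple_mem : ∀ i, simple i ∈ pos
  simple_indep : LinearIndependent ℝ simple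
  pos_comb : ∀ α ∈ pos, ∃ d : Fin ℓ → ℕ, α = ∑ i, (d i : ℝ) • simple i
  /-- the marks `c i` of the highest root -/
  c : Fin ℓ → ℕ
  c_pos : ∀ i, 0 < c i
  /-- the highest root `α̃` -/
  highest : V ℓ
  highest_mem : highest ∈ pos
  highest_eq : highest = ∑ i, (c i : ℝ) • simple i
  highest_max : ∀ α ∈ pos, ∃ d : Fin ℓ → ℕ, highest - α = ∑ i, (d i : ℝ) • simple i
  /-- the Weyl group `W` -/
  W : Subgroup ((V ℓ) ≃ₗ[ℝ] (V ℓ))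
  W_gen : W = Subgroup.closure
      {s : (V ℓ) ≃ₗ[ℝ] (V ℓ) | ∃ α ∈ Φ, ∀ x, s x = x - (2 * ⟪x, α⟫ / ⟪α, α⟫) • α}

namespace RootSystemData

variable {ℓ : ℕ} (R : RootSystemData ℓ)

/-- The extended base `Δ̃ = {α₀, α₁, …, α_ℓ}`, with `none ↦ α₀ = -α̃`. -/
def ext : Option (Fin ℓ) → V ℓ
  | none => -R.highest
  | some i => R.simple i

/-- The extended marks, with `c₀ = 1`. -/
def cExt : Option (Fin ℓ) → ℕ
  | none => 1
  | some i => R.c i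

/-- The Coxeter number `h = c₀ + c₁ + ⋯ + c_ℓ`. -/
def coxh : ℕ := ∑ i : Option (Fin ℓ), R.cExt i

/-- The descent statistic `dsc_Ψ(w) = ∑_{w(α_i) ∈ -Ψᶜ} c_i` (`Ψᶜ = Φ⁺ \ Ψ`). -/
def dsc (Ψ : Set (V ℓ)) (w : (V ℓ) ≃ₗ[ℝ] (V ℓ)) : ℕ :=
  ∑ i : Option (Fin ℓ), if w (R.ext i) ∈ (-(R.pos \ Ψ) : Set (V ℓ)) then R.cExt i else 0

/-- `dsc̄_Ψ(w) = ∑_{w(α_i) ∈ -Ψ} c_i`. -/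
def dscBar (Ψ : Set (V ℓ)) (w : (V ℓ) ≃ₗ[ℝ] (V ℓ)) : ℕ :=
  ∑ i : Option (Fin ℓ), if w (R.ext i) ∈ (-Ψ : Set (V ℓ)) then R.cExt i else 0

/-- `asc_Ψ(w) = ∑_{w(α_i) ∈ Ψᶜ} c_i`. -/
def asc (Ψ : Set (V ℓ)) (w : (V ℓ) ≃ₗ[ℝ] (V ℓ)) : ℕ :=
  ∑ i : Option (Fin ℓ), if w (R.ext i) ∈ R.pos \ Ψ then R.cExt i else 0

/-- `asc̄_Ψ(w) = ∑_{w(α_i) ∈ Ψ} c_i`. -/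
def ascBar (Ψ : Set (V ℓ)) (w : (V ℓ) ≃ₗ[ℝ] (V ℓ)) : ℕ :=
  ∑ i : Option (Fin ℓ), if w (R.ext i) ∈ Ψ then R.cExt i else 0

/-- The affine hyperplane `H_{α,m} = {x : (α,x) = m}`. -/
def Hyp {ℓ' : ℕ} (α : V ℓ') (m : ℤ) : Set (V ℓ') := {x | ⟪α, x⟫ = (m : ℝ)}

/-- The complement of all the affine hyperplanes `H_{α,m}`, `α ∈ Φ⁺`, `m ∈ ℤ`. -/
def AffC : Set (V ℓ) := {x | ∀ α ∈ R.pos, ∀ m : ℤ, ⟪α, x⟫ ≠ (m : ℝ)}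

/-- An alcove is a connected component of the complement of the affine hyperplanes. -/
def IsAlcove (A : Set (V ℓ)) : Prop :=
  ∃ x ∈ R.AffC, A = connectedComponentIn R.AffC x

/-- The half-open fundamental parallelepiped `P^◊ = {x : 0 < (α_i,x) ≤ 1 for all i}`. -/
def Pdia : Set (V ℓ) := {x | ∀ i, 0 < ⟪R.simple i, x⟫ ∧ ⟪R.simple i, x⟫ ≤ 1}

/-- The partial closure `A^◊` of an alcove `A`: the points of the closure lying only on
walls `H_{α,m}` for which the alcove is on the lower (`<`) side. -/
def pc (A : Set (V ℓ)) : Set (V ℓ) :=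
  {x ∈ closure A | ∀ α ∈ R.pos, ∀ m : ℤ, ⟪α, x⟫ = (m : ℝ) → ∀ y ∈ A, ⟪α, y⟫ < (m : ℝ)}

/-- The coweight lattice `Z(Φ^∨)`. -/
def coweightLat : AddSubgroup (V ℓ) where
  carrier := {x | ∀ i, ∃ n : ℤ, ⟪R.simple i, x⟫ = (n : ℝ)}
  add_mem' := by
    intro x y hx hy i
    obtain ⟨n, hn⟩ := hx i
    obtain ⟨m, hm⟩ := hy i
    exact ⟨n + m, by push_cast; rw [inner_add_right, hn, hm]⟩
  zero_mem' := fun i => ⟨0, by simp⟩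
  neg_mem' := by
    intro x hx i
    obtain ⟨n, hn⟩ := hx i
    exact ⟨-n, by push_cast; rw [inner_neg_right, hn]⟩

/-- The coroot lattice `Q(Φ^∨)`, generated by the simple coroots. -/
def corootLat : AddSubgroup (V ℓ) :=
  AddSubgroup.closure {v | ∃ i, v = (2 / ⟪R.simple i, R.simple i⟫) • R.simple i}

/-- The index of connection `f = [Z(Φ^∨) : Q(Φ^∨)]`. -/
def conIndex : ℕ := (R.corootLat.addSubgroupOf R.coweightLat).index

/-- The open fundamental alcove `A^∘`. -/
def alc : Set (V ℓ) := {x | (∀ i, 0 < ⟪R.simple i, x⟫) ∧ ⟪R.highest, x⟫ < 1}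

/-- The closed fundamental alcove `Ā^∘`. -/
def alcC : Set (V ℓ) := {x | (∀ i, 0 ≤ ⟪R.simple i, x⟫) ∧ ⟪R.highest, x⟫ ≤ 1}

/-- The Ehrhart counting function `L_P(q) = #(qP ∩ Z(Φ^∨))` (with value `0` for `q < 0`). -/
def LP (P : Set (V ℓ)) (q : ℤ) : ℕ :=
  if q < 0 then 0 else Set.ncard {x : V ℓ | x ∈ R.coweightLat ∧ ∃ y ∈ P, x = (q : ℝ) • y}

/-- `S` is a facet of the partially closed alcove `A^◊`. -/
def IsFacetOf (A S : Set (V ℓ)) : Prop :=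
  (∃ β ∈ R.pos, ∃ m : ℤ, S = R.pc A ∩ Hyp β m) ∧
    Module.finrank ℝ (vectorSpan ℝ S) = ℓ - 1

/-- `Ψ ⊆ Φ⁺` is compatible with the Worpitzky partition. -/
def Compatible (Ψ : Set (V ℓ)) : Prop :=
  ∀ A : Set (V ℓ), R.IsAlcove A → A ⊆ R.Pdia → ∀ α ∈ Ψ, ∀ m : ℤ,
    (R.pc A ∩ Hyp α m).Nonempty →
      ∃ β ∈ Ψ, ∃ m' : ℤ, R.pc A ∩ Hyp α m ⊆ R.pc A ∩ Hyp β m' ∧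
        R.IsFacetOf A (R.pc A ∩ Hyp β m')

/-- The characteristic quasi-polynomial of `Ψ` w.r.t. the root lattice: the number of points
of `(ℤ/q)^ℓ` avoiding all the subgroups determined by the roots of `Ψ`, whose coordinates in
the basis of simple roots are given by `crd`. -/
def chi (Ψ : Set (V ℓ)) (crd : V ℓ → Fin ℓ → ℕ) (q : ℕ) : ℕ :=
  Nat.card {z : Fin ℓ → ZMod q // ∀ α ∈ Ψ, ∑ i, (crd α i : ZMod q) * z i ≠ 0}

end RootSystemData


namespace RootSystemData

variable {ℓ : ℕ} (R : RootSystemData ℓ)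

section Aux

variable [Nonempty (Fin ℓ)]

/-- The simple roots as a basis of `V ℓ`. -/
noncomputable def sBasis : Module.Basis (Fin ℓ) ℝ (V ℓ) :=
  basisOfLinearIndependentOfCardEqFinrank R.simple_indep (by simp)

lemma sBasis_apply (i : Fin ℓ) : R.sBasis i = R.simple i := by
  simp [sBasis]

lemma repr_sum (d : Fin ℓ → ℝ) (j : Fin ℓ) :
    R.sBasis.repr (∑ i, d i • R.simple i) j = d j := by
  have h : ∑ i, d i • R.simple i = ∑ i, d i • R.sBasis i := by
    simp [sBasis_apply]
  rw [h, R.sBasis.repr_sum_self]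

lemma repr_highest (j : Fin ℓ) : R.sBasis.repr R.highest j = R.c j := by
  rw [R.highest_eq, R.repr_sum]

lemma pos_repr {α : V ℓ} (hα : α ∈ R.pos) :
    ∃ d : Fin ℓ → ℕ, (∀ j, R.sBasis.repr α j = (d j : ℝ)) ∧ ∀ j, d j ≤ R.c j := by
  obtain ⟨d, hd⟩ := R.pos_comb α hα
  obtain ⟨d', hd'⟩ := R.highest_max α hα
  refine ⟨d, fun j => by rw [hd, R.repr_sum], fun j => ?_⟩
  have h1 : R.sBasis.repr (R.highest - α) j = (d' j : ℝ) := by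
    rw [hd', R.repr_sum]
  rw [map_sub, Finsupp.sub_apply, R.repr_highest, hd, R.repr_sum] at h1
  have h2 : (d j : ℝ) ≤ (R.c j : ℝ) := by
    have : (0:ℝ) ≤ (d' j : ℝ) := Nat.cast_nonneg _
    linarith
  exact_mod_cast h2

lemma repr_option_sum (f : Option (Fin ℓ) → ℝ) (j : Fin ℓ) :
    R.sBasis.repr (∑ i : Option (Fin ℓ), f i • R.ext i) j
      = f (some j) - f none * R.c j := by
  rw [Fintype.sum_option]
  show R.sBasis.repr (f none • (-R.highest) + ∑ i, f (some i) • R.simple i) j = _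
  rw [map_add, Finsupp.add_apply, map_smul, Finsupp.smul_apply, map_neg, Finsupp.neg_apply,
    R.repr_highest, R.repr_sum]
  simp [smul_eq_mul]
  ring

lemma ext_injective : Function.Injective R.ext := by
  intro i j h
  match i, j with
  | none, none => rfl
  | some a, some b =>
      exact congrArg some (R.simple_indep.injective h)
  | none, some b =>
      exfalso
      have h1 := congrArg (fun v => R.sBasis.repr v b) h
      simp only [ext] at h1
      rw [map_neg, Finsupp.neg_apply, R.repr_highest, ← R.sBasis_apply,
        R.sBasis.repr_self_apply] at h1
      simp only [if_true] at h1
      have : (0:ℝ) ≤ (R.c b : ℝ) := Nat.cast_nonneg _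
      linarith
  | some a, none =>
      exfalso
      have h1 := congrArg (fun v => R.sBasis.repr v a) h
      simp only [ext] at h1
      rw [map_neg, Finsupp.neg_apply, R.repr_highest, ← R.sBasis_apply,
        R.sBasis.repr_self_apply] at h1
      simp only [if_true] at h1
      have : (0:ℝ) ≤ (R.c a : ℝ) := Nat.cast_nonneg _
      linarith

/-- Core combinatorial lemma: a positive root which is an integral combination of
`-ext i`, `i ∈ S`, is a nonnegative or nonpositive such combination. -/
lemma core (S : Finset (Option (Fin ℓ))) (hS : S ≠ Finset.univ)
    (δ : V ℓ) (hδ : δ ∈ R.pos) (a : Option (Fin ℓ) → ℤ)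
    (ha : δ = ∑ i ∈ S, (a i : ℝ) • (-R.ext i)) :
    (∃ d : Option (Fin ℓ) → ℕ, δ = ∑ i ∈ S, (d i : ℝ) • (-R.ext i)) ∨
    (∃ d : Option (Fin ℓ) → ℕ, δ = -∑ i ∈ S, (d i : ℝ) • (-R.ext i)) := by
  classical
  set A : Option (Fin ℓ) → ℤ := fun i => if i ∈ S then a i else 0 with hA
  have hsum : δ = ∑ i : Option (Fin ℓ), (-(A i) : ℝ) • R.ext i := by
    rw [ha, ← Finset.sum_subset (Finset.subset_univ S)
      (by intro x _ hx; simp [hA, hx])]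
    refine Finset.sum_congr rfl (fun i hi => ?_)
    simp only [hA, if_pos hi]
    rw [neg_smul, smul_neg]
  have hrepr : ∀ j, R.sBasis.repr δ j = ((A none * R.c j - A (some j) : ℤ) : ℝ) := by
    intro j
    rw [hsum, R.repr_option_sum]
    push_cast
    ring
  obtain ⟨d', hd'1, hd'2⟩ := R.pos_repr hδ
  have key : ∀ j, (d' j : ℤ) = A none * R.c j - A (some j) := by
    intro j
    have := (hd'1 j).symm.trans (hrepr j)
    exact_mod_cast this
  have hex : ∃ i, i ∉ S := by
    by_contra h
    push_neg at h
    exact hS (Finset.eq_univ_iff_forall.mpr h)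
  have hAnone : A none = 0 ∨ A none = 1 := by
    by_cases hn : none ∈ S
    · obtain ⟨i₀, hi₀⟩ := hex
      match i₀ with
      | none => exact absurd hn hi₀
      | some j₀ =>
        have h0 : A (some j₀) = 0 := by simp [hA, hi₀]
        have h1 := key j₀
        rw [h0, sub_zero] at h1
        have hc : (0:ℤ) < R.c j₀ := by exact_mod_cast R.c_pos j₀
        have hd0 : (0:ℤ) ≤ (d' j₀ : ℤ) := Int.ofNat_nonneg _
        have hdc : (d' j₀ : ℤ) ≤ (R.c j₀ : ℤ) := by exact_mod_cast hd'2 j₀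
        have h2 : 0 ≤ A none :=
          le_of_mul_le_mul_right (by rw [zero_mul, ← h1]; exact hd0) hc
        have h3 : A none ≤ 1 :=
          le_of_mul_le_mul_right (by rw [one_mul, ← h1]; exact hdc) hc
        omega
    · left; simp [hA, hn]
  rcases hAnone with h0 | h1
  · -- nonpositive combination
    right
    refine ⟨fun i => match i with | none => 0 | some j => d' j, ?_⟩
    have hcongr : ∀ i ∈ S,
        ((match i with | none => 0 | some j => d' j : ℕ) : ℝ) • (-R.ext i)
          = -((a i : ℝ) • (-R.ext i)) := by
      intro i hi
      rw [← neg_smul]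
      congr 1
      match i with
      | none =>
          have : a none = 0 := by
            have := h0; rw [hA] at this; simpa [hi] using this
          simp [this]
      | some j =>
          have hk := key j
          rw [h0, zero_mul, zero_sub] at hk
          have haj : A (some j) = a (some j) := by simp [hA, hi]
          rw [haj] at hk
          have : (d' j : ℝ) = -(a (some j) : ℝ) := by exact_mod_cast congrArg (Int.cast : ℤ → ℝ) hk
          simpa using this
    rw [Finset.sum_congr rfl hcongr, Finset.sum_neg_distrib, neg_neg, ← ha]
  · -- nonnegative combination
    left
    have hn : none ∈ S := by
      by_contra hn
      have : A none = 0 := by simp [hA, hn]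
      omega
    refine ⟨fun i => match i with | none => 1 | some j => R.c j - d' j, ?_⟩
    rw [ha]
    refine Finset.sum_congr rfl (fun i hi => ?_)
    congr 1
    match i with
    | none =>
        have : a none = 1 := by
          have := h1; rw [hA] at this; simpa [hn] using this
        simp [this]
    | some j =>
        have hk := key j
        rw [h1, one_mul] at hk
        have haj : A (some j) = a (some j) := by simp [hA, hi]
        rw [haj] at hk
        have hle : d' j ≤ R.c j := hd'2 j
        have : (a (some j) : ℝ) = (R.c j : ℝ) - (d' j : ℝ) := by
          have : a (some j) = (R.c j : ℤ) - (d' j : ℤ) := by omega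
          exact_mod_cast congrArg (Int.cast : ℤ → ℝ) this
        rw [this, Nat.cast_sub hle]

end Aux

/-- Elements of the Weyl group preserve `Φ`. -/
lemma weyl_maps_Phi {w : (V ℓ) ≃ₗ[ℝ] (V ℓ)} (hw : w ∈ R.W) :
    (∀ α ∈ R.Φ, w α ∈ R.Φ) ∧ (∀ α ∈ R.Φ, w.symm α ∈ R.Φ) := by
  rw [R.W_gen] at hw
  induction hw using Subgroup.closure_induction with
  | mem s hs =>
      obtain ⟨α, hα, hsx⟩ := hs
      have hα0 : α ≠ 0 := fun h => R.nonzero (h ▸ hα)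
      have hαα : ⟪α, α⟫ ≠ 0 := fun h => hα0 (inner_self_eq_zero.mp h)
      have hrefl : ∀ β ∈ R.Φ, s β ∈ R.Φ := fun β hβ => by
        rw [hsx]; exact R.reflect_mem α hα β hβ
      have key : ∀ x, s (s x) = x := by
        intro x
        rw [hsx (s x), hsx x]
        rw [inner_sub_left, real_inner_smul_left]
        have h2 : 2 * (⟪x, α⟫ - 2 * ⟪x, α⟫ / ⟪α, α⟫ * ⟪α, α⟫) / ⟪α, α⟫
            = -(2 * ⟪x, α⟫ / ⟪α, α⟫) := by
          rw [div_mul_cancel₀ _ hαα]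
          ring
        rw [h2, neg_smul, sub_neg_eq_add, sub_add_cancel]
      refine ⟨hrefl, fun β hβ => ?_⟩
      have : s.symm β = s β := by
        rw [LinearEquiv.symm_apply_eq, key]
      rw [this]
      exact hrefl β hβ
  | one => exact ⟨fun α h => h, fun α h => h⟩
  | mul x y hx hy ihx ihy =>
      exact ⟨fun α h => ihx.1 _ (ihy.1 _ h), fun α h => ihy.2 _ (ihx.2 _ h)⟩
  | inv x hx ih => exact ⟨fun α h => ih.2 _ h, fun α h => ih.1 _ h⟩

end RootSystemData

/-- for `w ∈ W` and a proper subset `𝒥 ⊊ Δ̃`, the set `D = -w(𝒥)` is a base for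
`Φ_D(ℤ) = Φ ∩ ℤD`: `D` is linearly independent and every root that is an integral combination
of `D` is a nonnegative or nonpositive integral combination of `D`. -/
theorem neg_weyl_image_of_proper_subset_is_base {ℓ : ℕ} (R : RootSystemData ℓ)
    (w : (V ℓ) ≃ₗ[ℝ] (V ℓ)) (hw : w ∈ R.W)
    (S : Finset (Option (Fin ℓ))) (hS : S ≠ Finset.univ) :
    LinearIndependent ℝ (fun i : {i // i ∈ S} => -(w (R.ext i))) ∧
    ∀ γ ∈ R.Φ, γ ∈ Submodule.span ℤ ((fun i => -(w (R.ext i))) '' ↑S) →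
      (∃ d : Option (Fin ℓ) → ℕ, γ = ∑ i ∈ S, (d i : ℝ) • (-(w (R.ext i)))) ∨
      (∃ d : Option (Fin ℓ) → ℕ, γ = -∑ i ∈ S, (d i : ℝ) • (-(w (R.ext i)))) := by
  classical
  rcases Nat.eq_zero_or_pos ℓ with hℓ | hℓ
  · subst hℓ
    have hSempty : S = ∅ := by
      rcases Finset.eq_empty_or_nonempty S with h | h
      · exact h
      · exfalso
        obtain ⟨x, hx⟩ := h
        apply hS
        apply Finset.eq_univ_iff_forall.mpr
        intro y
        match x, y with
        | none, none => exact hx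
        | some j, _ => exact j.elim0
        | none, some j => exact j.elim0
    subst hSempty
    constructor
    · haveI : IsEmpty {i : Option (Fin 0) // i ∈ (∅ : Finset (Option (Fin 0)))} :=
        ⟨fun x => Finset.notMem_empty _ x.2⟩
      exact linearIndependent_empty_type
    · intro γ hγ hspan
      exfalso
      simp only [Finset.coe_empty, Set.image_empty, Submodule.span_empty,
        Submodule.mem_bot] at hspan
      exact R.nonzero (hspan ▸ hγ)
  haveI : Nonempty (Fin ℓ) := ⟨⟨0, hℓ⟩⟩
  have hex : ∃ i, i ∉ S := by
    by_contra h
    push_neg at h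
    exact hS (Finset.eq_univ_iff_forall.mpr h)
  constructor
  · -- linear independence
    have hind : LinearIndependent ℝ (fun i : {i // i ∈ S} => R.ext ↑i) := by
      rw [Fintype.linearIndependent_iff]
      intro g hg
      set g' : Option (Fin ℓ) → ℝ := fun i => if h : i ∈ S then g ⟨i, h⟩ else 0 with hg'
      have hsum : ∑ i : Option (Fin ℓ), g' i • R.ext i = 0 := by
        rw [← Finset.sum_subset (Finset.subset_univ S)
          (by intro x _ hx; simp [hg', hx])]
        rw [← Finset.sum_coe_sort S (fun i => g' i • R.ext i), ← hg]
        exact Finset.sum_congr rfl (fun i _ => by simp [hg', i.2])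
      have hcoord : ∀ j, g' (some j) = g' none * R.c j := by
        intro j
        have h1 := congrArg (fun v => R.sBasis.repr v j) hsum
        simp only [map_zero, Finsupp.coe_zero, Pi.zero_apply] at h1
        rw [R.repr_option_sum] at h1
        linarith
      have hnone : g' none = 0 := by
        by_cases hn : none ∈ S
        · obtain ⟨i₀, hi₀⟩ := hex
          match i₀ with
          | none => exact absurd hn hi₀
          | some j₀ =>
            have h1 : g' (some j₀) = 0 := by simp [hg', hi₀]
            have h2 := hcoord j₀
            have hc : (0:ℝ) < R.c j₀ := by exact_mod_cast R.c_pos j₀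
            rw [h1] at h2
            rcases mul_eq_zero.mp h2.symm with h | h
            · exact h
            · exact absurd h (ne_of_gt hc)
        · simp [hg', hn]
      intro i
      obtain ⟨v, hv⟩ := i
      have hgv : g ⟨v, hv⟩ = g' v := by simp [hg', hv]
      rw [hgv]
      match v with
      | none => exact hnone
      | some j => rw [hcoord j, hnone, zero_mul]
    have hmap := hind.map' (w.trans (LinearEquiv.neg ℝ)).toLinearMap
      (LinearMap.ker_eq_bot_of_injective (w.trans (LinearEquiv.neg ℝ)).injective)
    exact hmap
  · -- base property
    intro γ hγΦ hspan
    have hext_inj : Function.Injective R.ext := R.ext_injective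
    have hu_inj : Function.Injective (fun i => -(w (R.ext i))) := by
      intro i j h
      exact hext_inj (w.injective (neg_injective h))
    rw [← Finset.coe_image] at hspan
    obtain ⟨f, -, hf⟩ := Submodule.mem_span_finset.mp hspan
    rw [Finset.sum_image (fun i _ j _ h => hu_inj h)] at hf
    set a : Option (Fin ℓ) → ℤ := fun i => f (-(w (R.ext i))) with ha
    have hγsum : γ = ∑ i ∈ S, (a i : ℝ) • (-(w (R.ext i))) := by
      rw [← hf]
      exact (Finset.sum_congr rfl (fun i _ => (Int.cast_smul_eq_zsmul ℝ _ _))).symm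
    have hwΦ := R.weyl_maps_Phi hw
    have hδΦ : w.symm γ ∈ R.Φ := hwΦ.2 γ hγΦ
    have hδsum : w.symm γ = ∑ i ∈ S, (a i : ℝ) • (-(R.ext i)) := by
      rw [hγsum, map_sum]
      exact Finset.sum_congr rfl fun i _ => by rw [map_smul, map_neg, w.symm_apply_apply]
    have push : ∀ (d : Option (Fin ℓ) → ℕ),
        w (∑ i ∈ S, (d i : ℝ) • (-(R.ext i))) = ∑ i ∈ S, (d i : ℝ) • (-(w (R.ext i))) := by
      intro d
      rw [map_sum]
      exact Finset.sum_congr rfl fun i _ => by rw [map_smul, map_neg]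
    by_cases hp : w.symm γ ∈ R.pos
    · rcases R.core S hS _ hp a hδsum with ⟨d, hd⟩ | ⟨d, hd⟩
      · exact Or.inl ⟨d, by rw [← w.apply_symm_apply γ, hd, push]⟩
      · exact Or.inr ⟨d, by rw [← w.apply_symm_apply γ, hd, map_neg, push]⟩
    · have hnegpos : -(w.symm γ) ∈ R.pos := by
        by_contra h
        exact hp ((R.pos_choice _ hδΦ).mpr (by simpa using h))
      have hnegsum : -(w.symm γ) = ∑ i ∈ S, ((-(a i) : ℤ) : ℝ) • (-(R.ext i)) := by
        rw [hδsum, ← Finset.sum_neg_distrib]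
        exact Finset.sum_congr rfl fun i _ => by push_cast; rw [neg_smul]
      rcases R.core S hS _ hnegpos (fun i => -(a i)) hnegsum with ⟨d, hd⟩ | ⟨d, hd⟩
      · have hd' : w.symm γ = -∑ i ∈ S, (d i : ℝ) • (-(R.ext i)) := by
          rw [← neg_eq_iff_eq_neg, ← hd]
        exact Or.inr ⟨d, by rw [← w.apply_symm_apply γ, hd', map_neg, push]⟩
      · have hd' : w.symm γ = ∑ i ∈ S, (d i : ℝ) • (-(R.ext i)) := by
          have := neg_injective (hd.trans rfl : -(w.symm γ) = -∑ i ∈ S, (d i : ℝ) • (-(R.ext i)))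
          exact this
        exact Or.inl ⟨d, by rw [← w.apply_symm_apply γ, hd', push]⟩
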